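/- Let γ > 1, Q(v) = v^{-(γ-1)}/(γ-1), p(v) = v^{-γ}, and v₊ > 0. There exist constants C, δ* > 0 such that for any 0 < δ < δ* and any v, w > 0 with |p(v) - p(w)| < δ and |p(w) - p(v₊)| < δ, one has Q(v|w) ≤ ( p(w)^{-1/γ-1}/(2γ) + Cδ ) |p(v) - p(w)|², where Q(v|w) = Q(v) - Q(w) - Q'(w)(v-w). -/

import Mathlib

open Real Set

/-- Pressure `p(v) = v^{-γ}`. -/
noncomputable def pγ (γ v : ℝ) : ℝ := v ^ (-γ)

/-- Internal energy `Q(v) = v^{-(γ-1)}/(γ-1)`. -/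
noncomputable def Qγ (γ v : ℝ) : ℝ := v ^ (-(γ - 1)) / (γ - 1)

/-- Relative internal energy `Q(v|w)`; note `Q'(w) = -w^{-γ} = -p(w)`. -/
noncomputable def Qrel (γ v w : ℝ) : ℝ := Qγ γ v - Qγ γ w - (-(w ^ (-γ))) * (v - w)


/-- Lipschitz bound for `t ↦ t^(-e)` on `[m, ∞)`. -/
lemma rpow_neg_lipschitz {e m : ℝ} (he : 0 < e) (hm : 0 < m) {x y : ℝ}
    (hx : m ≤ x) (hy : m ≤ y) :
    |x ^ (-e) - y ^ (-e)| ≤ (e * m ^ (-e - 1)) * |x - y| := by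
  have key := Convex.norm_image_sub_le_of_norm_hasDerivWithin_le
    (f := fun t : ℝ => t ^ (-e)) (f' := fun t : ℝ => (-e) * t ^ (-e - 1))
    (s := Ici m) (C := e * m ^ (-e - 1)) ?_ ?_ (convex_Ici m) hy hx
  · simpa [Real.norm_eq_abs] using key
  · intro t ht
    exact (Real.hasDerivAt_rpow_const (Or.inl (lt_of_lt_of_le hm ht).ne')).hasDerivWithinAt
  · intro t ht
    have ht0 : 0 < t := lt_of_lt_of_le hm ht
    have : t ^ (-e - 1) ≤ m ^ (-e - 1) :=
      Real.rpow_le_rpow_of_nonpos hm ht (by linarith)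
    have h1 : (0:ℝ) ≤ t ^ (-e - 1) := (Real.rpow_pos_of_pos ht0 _).le
    rw [Real.norm_eq_abs, abs_mul, abs_neg, abs_of_pos he, abs_of_nonneg h1]
    exact mul_le_mul_of_nonneg_left this he.le

lemma main_ineq {γ q A p lo : ℝ} (hγ : 1 < γ) (hlo : 0 < lo) (hp : lo ≤ p) (hq : lo ≤ q)
    (hbound : ∀ x, min p q ≤ x → x ≤ max p q → x ^ (-(1/γ) - 1) / γ ≤ 2 * A) :
    (p ^ ((γ-1)/γ) / (γ-1) + q * p ^ (-(1/γ))) - (q ^ ((γ-1)/γ) / (γ-1) + q * q ^ (-(1/γ)))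
      ≤ A * (p - q) ^ 2 := by
  have hγ0 : (0:ℝ) < γ := by linarith
  set h : ℝ → ℝ := fun x => x ^ ((γ-1)/γ) / (γ-1) + q * x ^ (-(1/γ)) - A * (x - q) ^ 2 with hh
  have hderiv : ∀ x : ℝ, 0 < x →
      HasDerivAt h ((x - q) * (x ^ (-(1/γ) - 1) / γ - 2 * A)) x := by
    intro x hx
    have d1 : HasDerivAt (fun y : ℝ => y ^ ((γ-1)/γ))
        (((γ-1)/γ) * x ^ ((γ-1)/γ - 1)) x :=
      Real.hasDerivAt_rpow_const (Or.inl hx.ne')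
    have d2 : HasDerivAt (fun y : ℝ => y ^ (-(1/γ)))
        ((-(1/γ)) * x ^ (-(1/γ) - 1)) x :=
      Real.hasDerivAt_rpow_const (Or.inl hx.ne')
    have d3 : HasDerivAt (fun y : ℝ => (y - q) ^ 2) (2 * (x - q)) x := by
      simpa using ((hasDerivAt_id x).sub_const q).fun_pow 2
    have D := ((d1.div_const (γ-1)).add (d2.const_mul q)).sub (d3.const_mul A)
    refine D.congr_deriv ?_
    have ha : (γ-1)/γ - 1 = -(1/γ) := by field_simp; ring
    have hx1 : x ^ (-(1/γ)) = x ^ (-(1/γ) - 1) * x := by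
      rw [← Real.rpow_add_one hx.ne']; ring_nf
    rw [ha, hx1]
    have hγ1 : γ - 1 ≠ 0 := by linarith
    field_simp
    ring
  rcases lt_trichotomy p q with hpq | hpq | hpq
  · -- p < q : h monotone on [p, q]
    have mono : MonotoneOn h (Icc p q) := by
      apply monotoneOn_of_deriv_nonneg (convex_Icc p q)
      · intro x hx
        exact (hderiv x (lt_of_lt_of_le hlo (hp.trans hx.1))).continuousAt.continuousWithinAt
      · rw [interior_Icc]
        intro x hx
        exact (hderiv x (lt_of_lt_of_le hlo (hp.trans hx.1.le))).differentiableAt.differentiableWithinAt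
      · rw [interior_Icc]
        intro x hx
        rw [(hderiv x (lt_of_lt_of_le hlo (hp.trans hx.1.le))).deriv]
        have hb := hbound x (by rw [min_eq_left hpq.le]; exact hx.1.le)
          (by rw [max_eq_right hpq.le]; exact hx.2.le)
        have : x - q ≤ 0 := by linarith [hx.2]
        nlinarith
    have := mono (left_mem_Icc.2 hpq.le) (right_mem_Icc.2 hpq.le) hpq.le
    simp only [hh] at this
    nlinarith [this]
  · subst hpq; simp
  · -- q < p : h antitone on [q, p]
    have anti : AntitoneOn h (Icc q p) := by
      apply antitoneOn_of_deriv_nonpos (convex_Icc q p)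
      · intro x hx
        exact (hderiv x (lt_of_lt_of_le hlo (hq.trans hx.1))).continuousAt.continuousWithinAt
      · rw [interior_Icc]
        intro x hx
        exact (hderiv x (lt_of_lt_of_le hlo (hq.trans hx.1.le))).differentiableAt.differentiableWithinAt
      · rw [interior_Icc]
        intro x hx
        rw [(hderiv x (lt_of_lt_of_le hlo (hq.trans hx.1.le))).deriv]
        have hb := hbound x (by rw [min_eq_right hpq.le]; exact hx.1.le)
          (by rw [max_eq_left hpq.le]; exact hx.2.le)
        have : 0 ≤ x - q := by linarith [hx.1]
        nlinarith
    have := anti (left_mem_Icc.2 hpq.le) (right_mem_Icc.2 hpq.le) hpq.le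
    simp only [hh] at this
    nlinarith [this]

/-- Sharp quadratic upper bound. -/
theorem rel_internal_energy_sharp_upper (γ vplus : ℝ) (hγ : 1 < γ) (hvplus : 0 < vplus) :
    ∃ C > 0, ∃ δstar > 0, ∀ δ : ℝ, 0 < δ → δ < δstar →
      ∀ v w : ℝ, 0 < v → 0 < w →
        |pγ γ v - pγ γ w| < δ → |pγ γ w - pγ γ vplus| < δ →
        Qrel γ v w ≤ (pγ γ w ^ (-1 / γ - 1) / (2 * γ) + C * δ) * (pγ γ v - pγ γ w) ^ 2 := by
  have hγ0 : (0:ℝ) < γ := by linarith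
  set p₀ := vplus ^ (-γ) with hp₀def
  have hp₀ : 0 < p₀ := Real.rpow_pos_of_pos hvplus _
  set e : ℝ := 1/γ + 1 with hedef
  have he : 0 < e := by positivity
  set m := p₀ / 2 with hmdef
  have hm : 0 < m := by positivity
  set L := e * m ^ (-e - 1) with hLdef
  have hL : 0 < L := by positivity
  refine ⟨L / (2*γ), by positivity, p₀ / 4, by positivity, ?_⟩
  intro δ hδ hδ' v w hv hw h1 h2
  have hqpos : 0 < pγ γ w := Real.rpow_pos_of_pos hw _
  have hppos : 0 < pγ γ v := Real.rpow_pos_of_pos hv _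
  have hq2 : |pγ γ w - p₀| < δ := h2
  have hqm : m < pγ γ w := by
    rw [abs_lt] at hq2; rw [hmdef]; linarith
  have hpm : m < pγ γ v := by
    rw [abs_lt] at h1 hq2; rw [hmdef]; linarith
  set A := pγ γ w ^ (-1 / γ - 1) / (2 * γ) + L / (2*γ) * δ with hAdef
  have hexp : -1 / γ - 1 = -e := by rw [hedef]; ring
  have hexp2 : -(1/γ) - 1 = -e := by rw [hedef]; ring
  have hbound : ∀ x, min (pγ γ v) (pγ γ w) ≤ x → x ≤ max (pγ γ v) (pγ γ w) →
      x ^ (-(1/γ) - 1) / γ ≤ 2 * A := by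
    intro x hx1 hx2
    have hxm : m ≤ x := le_trans (le_min hpm.le hqm.le) hx1
    have hxq : |x - pγ γ w| ≤ |pγ γ v - pγ γ w| := by
      rw [abs_sub_le_iff]
      constructor
      · calc x - pγ γ w ≤ max (pγ γ v) (pγ γ w) - min (pγ γ v) (pγ γ w) := by
              have h3 : min (pγ γ v) (pγ γ w) ≤ pγ γ w := min_le_right _ _
              linarith
          _ = |pγ γ w - pγ γ v| := max_sub_min_eq_abs _ _
          _ = |pγ γ v - pγ γ w| := abs_sub_comm _ _
      · calc pγ γ w - x ≤ max (pγ γ v) (pγ γ w) - min (pγ γ v) (pγ γ w) := by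
              have h3 : pγ γ w ≤ max (pγ γ v) (pγ γ w) := le_max_right _ _
              linarith
          _ = |pγ γ w - pγ γ v| := max_sub_min_eq_abs _ _
          _ = |pγ γ v - pγ γ w| := abs_sub_comm _ _
    have hlip := rpow_neg_lipschitz he hm hxm hqm.le
    have hxe : x ^ (-e) ≤ pγ γ w ^ (-e) + L * δ := by
      have h4 : |x ^ (-e) - pγ γ w ^ (-e)| ≤ L * |x - pγ γ w| := hlip
      have h5 : |x - pγ γ w| ≤ δ := le_of_lt (lt_of_le_of_lt hxq h1)
      have h6 : L * |x - pγ γ w| ≤ L * δ := mul_le_mul_of_nonneg_left h5 hL.le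
      have := abs_le.1 (h4.trans h6)
      linarith [this.2]
    rw [hexp2]
    have h2A : 2 * A = pγ γ w ^ (-e) / γ + L * δ / γ := by
      rw [hAdef, hexp]; field_simp
    rw [h2A]
    rw [← add_div ]
    exact div_le_div_of_nonneg_right hxe hγ0.le
  have key := main_ineq (A := A) hγ hm hpm.le hqm.le hbound
  have hQrel : Qrel γ v w =
      (pγ γ v ^ ((γ-1)/γ) / (γ-1) + pγ γ w * pγ γ v ^ (-(1/γ)))
        - (pγ γ w ^ ((γ-1)/γ) / (γ-1) + pγ γ w * pγ γ w ^ (-(1/γ))) := by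
    have hav : pγ γ v ^ ((γ-1)/γ) = v ^ (-(γ-1)) := by
      rw [pγ, ← Real.rpow_mul hv.le]; congr 1; field_simp
    have hbv : pγ γ v ^ (-(1/γ)) = v := by
      rw [pγ, ← Real.rpow_mul hv.le]
      have : -γ * -(1/γ) = 1 := by field_simp
      rw [this, Real.rpow_one]
    have haw : pγ γ w ^ ((γ-1)/γ) = w ^ (-(γ-1)) := by
      rw [pγ, ← Real.rpow_mul hw.le]; congr 1; field_simp
    have hbw : pγ γ w ^ (-(1/γ)) = w := by
      rw [pγ, ← Real.rpow_mul hw.le]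
      have : -γ * -(1/γ) = 1 := by field_simp
      rw [this, Real.rpow_one]
    rw [hav, hbv, haw, hbw, Qrel, Qγ, Qγ, pγ]
    ring
  rw [hQrel]
  exact key
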